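/- For the triangle Δ = conv{(0,0), (1, (p-1)/p), (p, 0)} with integer p ≥ 2, the number of lattice points in nΔ for a positive integer n is ((p-1)/2)n² + ((p+1)/2)n + 1; in particular the Ehrhart counting function is a polynomial in n even though Δ has denominator p. -/

import Mathlib

open Pointwise

lemma divDecomp (p b : ℕ) (hp : 2 ≤ p) : ∃ q r, r < p ∧ b = p*q + r ∧ b/p = q := by
  refine ⟨b/p, b%p, Nat.mod_lt _ (by omega), (Nat.div_add_mod b p).symm, rfl⟩

lemma divId (p b : ℕ) (hp : 2 ≤ p) : (p-1)*(b+1)/p = b - b/p := by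
  obtain ⟨q, r, hrp, hb, hq⟩ := divDecomp p b hp
  have key : (p-1)*(b+1) = p*((p-1)*q + r) + (p-1-r) := by
    rw [hb]
    zify [show r ≤ p-1 from by omega, show 1 ≤ p from by omega]
    ring
  rw [key, Nat.mul_add_div (by omega), Nat.div_eq_of_lt (by omega), add_zero, hq, hb]
  have h2 : (p-1)*q + q = p*q := by
    zify [show 1 ≤ p from by omega]; ring
  omega

lemma pairdiv (p n m : ℕ) (hp : 2 ≤ p) (hm : m < n*p) : m/p + (n*p-1-m)/p = n-1 := by
  obtain ⟨q, r, hrp, hb, hq⟩ := divDecomp p m hp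
  have hmn : n*p = p*n := Nat.mul_comm n p
  have hpq : p*q < p*n := by omega
  have hqn : q < n := Nat.lt_of_mul_lt_mul_left hpq
  have e1 : p*(n-1-q) + p*q + p = p*n := by
    have h : (n-1-q) + q + 1 = n := by omega
    calc p*(n-1-q) + p*q + p = p*((n-1-q) + q + 1) := by ring
    _ = p*n := by rw [h]
  have key : n*p-1-m = (p-1-r) + p*(n-1-q) := by omega
  rw [hq, key, Nat.add_mul_div_left _ _ (by omega : 0 < p), Nat.div_eq_of_lt (show p-1-r < p by omega), zero_add]
  omega

open Finset in
lemma count (p n : ℕ) (hp : 2 ≤ p) (hn : 0 < n) :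
    2 * (∑ a ∈ range (n*p+1), (min ((p-1)*a/p) ((n*p-a)/p) + 1)) =
      (p-1)*n^2 + (p+1)*n + 2 := by
  have hpn : (p-1)*n + n = n*p := by zify [show 1 ≤ p from by omega]; ring
  have h2n : 2*n ≤ n*p := by nlinarith
  -- T = (np+1) + Σ g
  have hT : ∑ a ∈ range (n*p+1), (min ((p-1)*a/p) ((n*p-a)/p) + 1)
      = (∑ a ∈ range (n*p+1), min ((p-1)*a/p) ((n*p-a)/p)) + (n*p+1) := by
    rw [sum_add_distrib, sum_const, card_range, smul_eq_mul, mul_one]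
  -- split the sum
  have hsplit : ∑ a ∈ range (n*p+1), min ((p-1)*a/p) ((n*p-a)/p)
      = (∑ a ∈ range (n+1), (p-1)*a/p) + ∑ a ∈ Ico (n+1) (n*p+1), (n*p-a)/p := by
    rw [range_eq_Ico, ← Finset.sum_Ico_consecutive _ (by omega : 0 ≤ n+1) (by omega : n+1 ≤ n*p+1),
      ← range_eq_Ico]
    congr 1
    · apply Finset.sum_congr rfl
      intro a ha
      rw [mem_range] at ha
      have h1 : (p-1)*a ≤ (p-1)*n := Nat.mul_le_mul_left _ (by omega)
      exact min_eq_left (Nat.div_le_div_right (by omega))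
    · apply Finset.sum_congr rfl
      intro a ha
      rw [mem_Ico] at ha
      have h1 : (p-1)*n ≤ (p-1)*a := Nat.mul_le_mul_left _ (by omega)
      have h2 : (p-1)*a + a = a*p := by zify [show 1 ≤ p from by omega]; ring
      have h3 : n*p ≤ a*p := Nat.mul_le_mul_right _ (by omega)
      exact min_eq_right (Nat.div_le_div_right (by omega))
  -- first sum
  have hA1 : ∑ a ∈ range (n+1), (p-1)*a/p = ∑ i ∈ range n, (i - i/p) := by
    rw [Finset.sum_range_succ']
    simp only [Nat.mul_zero, Nat.zero_div, add_zero]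
    exact Finset.sum_congr rfl fun i _ => divId p i hp
  -- second sum
  have hA2 : ∑ a ∈ Ico (n+1) (n*p+1), (n*p-a)/p = ∑ j ∈ range (n*p-n), j/p := by
    rw [Finset.sum_Ico_eq_sum_range]
    have hL : n*p+1 - (n+1) = n*p - n := by omega
    rw [hL]
    rw [← Finset.sum_range_reflect (fun j => j/p) (n*p-n)]
    apply Finset.sum_congr rfl
    intro i hi
    rw [mem_range] at hi
    congr 1
    omega
  -- A1 + B = G
  have hG : (∑ i ∈ range n, (i - i/p)) + (∑ i ∈ range n, i/p) = ∑ i ∈ range n, i := by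
    rw [← sum_add_distrib]
    exact Finset.sum_congr rfl fun i _ => Nat.sub_add_cancel (Nat.div_le_self i p)
  have hGauss : (∑ i ∈ range n, i) * 2 = n * (n-1) := Finset.sum_range_id_mul_two n
  -- A2 = B + S2
  have hS2 : (∑ i ∈ range n, i/p) + (∑ j ∈ Ico n (n*p-n), j/p) = ∑ j ∈ range (n*p-n), j/p := by
    rw [range_eq_Ico, range_eq_Ico]
    exact Finset.sum_Ico_consecutive (fun j : ℕ => j/p) (by omega : 0 ≤ n) (by omega : n ≤ n*p-n)
  -- 2*S2 = (np-2n)*(n-1)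
  have hpair : 2 * (∑ j ∈ Ico n (n*p-n), j/p) = (n*p-2*n) * (n-1) := by
    rw [Finset.sum_Ico_eq_sum_range]
    have hL : n*p-n - n = n*p - 2*n := by omega
    rw [hL, two_mul]
    nth_rewrite 1 [← Finset.sum_range_reflect (fun i => (n+i)/p) (n*p-2*n)]
    rw [← sum_add_distrib]
    rw [show (n*p-2*n) * (n-1) = ∑ _i ∈ range (n*p-2*n), (n-1) from by
      rw [sum_const, card_range, smul_eq_mul]]
    apply Finset.sum_congr rfl
    intro i hi
    rw [mem_range] at hi
    have key := pairdiv p n (n+i) hp (by omega)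
    have he : n + (n*p-2*n-1-i) = n*p-1-(n+i) := by omega
    rw [he]
    omega
  -- assemble
  have hfin : (p-1)*n^2 + (p+1)*n + 2 = 2*(n*p) + 2 + n*(n-1) + (n*p-2*n)*(n-1) := by
    zify [h2n, show 1 ≤ p from by omega, show 1 ≤ n from hn]
    ring
  rw [hT, hsplit, hA1, hA2, hfin]
  omega

open Finset in
noncomputable def latF (p n : ℕ) : Finset (ℕ × ℕ) :=
  (range (n*p+1)).biUnion (fun a => (range (min ((p-1)*a/p) ((n*p-a)/p) + 1)).image (fun b => (a,b)))

open Finset in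
lemma mem_latF (p n : ℕ) (hp : 2 ≤ p) (q : ℕ × ℕ) :
    q ∈ latF p n ↔ q.1 ≤ n*p ∧ p*q.2 ≤ (p-1)*q.1 ∧ q.1 + p*q.2 ≤ n*p := by
  simp only [latF, mem_biUnion, mem_image, mem_range]
  constructor
  · rintro ⟨a, ha, b, hb, rfl⟩
    have hb' : b ≤ min ((p-1)*a/p) ((n*p-a)/p) := by omega
    have h1 : b ≤ (p-1)*a/p := le_trans hb' (min_le_left _ _)
    have h2 : b ≤ (n*p-a)/p := le_trans hb' (min_le_right _ _)
    have h1' : b*p ≤ (p-1)*a := (Nat.le_div_iff_mul_le (by omega)).mp h1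
    have h2' : b*p ≤ n*p-a := (Nat.le_div_iff_mul_le (by omega)).mp h2
    have hc : b*p = p*b := Nat.mul_comm b p
    dsimp only
    exact ⟨by omega, by omega, by omega⟩
  · rintro ⟨h1, h2, h3⟩
    refine ⟨q.1, by omega, q.2, ?_, rfl⟩
    have hc : q.2*p = p*q.2 := Nat.mul_comm _ _
    have g1 : q.2 ≤ (p-1)*q.1/p := (Nat.le_div_iff_mul_le (by omega)).mpr (by omega)
    have g2 : q.2 ≤ (n*p-q.1)/p := (Nat.le_div_iff_mul_le (by omega)).mpr (by omega)
    omega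

open Finset in
lemma card_latF (p n : ℕ) :
    (latF p n).card = ∑ a ∈ range (n*p+1), (min ((p-1)*a/p) ((n*p-a)/p) + 1) := by
  rw [latF, Finset.card_biUnion]
  · exact Finset.sum_congr rfl fun a _ => by
      rw [Finset.card_image_of_injective _ (fun b c h => by simpa using h), card_range]
  · intro a _ b _ hab
    rw [Function.onFun, Finset.disjoint_left]
    rintro ⟨x, y⟩ hx hy
    simp only [mem_image, mem_range] at hx hy
    obtain ⟨_, _, h1⟩ := hx
    obtain ⟨_, _, h2⟩ := hy
    apply hab
    have e1 := congrArg Prod.fst h1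
    have e2 := congrArg Prod.fst h2
    simp only [Prod.fst] at e1 e2
    omega

lemma combo_mem {E : Type*} [AddCommGroup E] [Module ℝ E] {s : Set E} (hs : Convex ℝ s)
    {v0 v1 v2 : E} (h0 : v0 ∈ s) (h1 : v1 ∈ s) (h2 : v2 ∈ s)
    {a b c : ℝ} (ha : 0 ≤ a) (hb : 0 ≤ b) (hc : 0 ≤ c) (habc : a + b + c = 1) :
    a • v0 + b • v1 + c • v2 ∈ s := by
  rcases eq_or_lt_of_le (by positivity : (0:ℝ) ≤ b + c) with h | h
  · have hb0 : b = 0 := by linarith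
    have hc0 : c = 0 := by linarith
    have ha1 : a = 1 := by linarith
    simpa [hb0, hc0, ha1] using h0
  · have hd : b + c ≠ 0 := ne_of_gt h
    have hz : (b/(b+c)) • v1 + (c/(b+c)) • v2 ∈ s :=
      hs h1 h2 (by positivity) (by positivity) (by field_simp)
    have hm := hs h0 hz ha (le_of_lt h) (by linarith)
    have : (b+c) • ((b/(b+c)) • v1 + (c/(b+c)) • v2) = b • v1 + c • v2 := by
      rw [smul_add, smul_smul, smul_smul, mul_div_cancel₀ _ hd, mul_div_cancel₀ _ hd]
    rw [this, ← add_assoc] at hm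
    exact hm

lemma mem_dilate (p n : ℕ) (hp : 2 ≤ p) (hn : 0 < n) (x : Fin 2 → ℝ) :
    x ∈ (n : ℝ) • convexHull ℝ
        ({![0, 0], ![1, ((p : ℝ) - 1) / p], ![(p : ℝ), 0]} : Set (Fin 2 → ℝ)) ↔
      (0 ≤ x 1 ∧ (p:ℝ) * x 1 ≤ ((p:ℝ) - 1) * x 0 ∧ x 0 + (p:ℝ) * x 1 ≤ (n:ℝ) * p) := by
  have hp0 : (0:ℝ) < p := by positivity
  have hp1 : (1:ℝ) < p := by exact_mod_cast (by omega : 1 < p)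
  have hn0 : (0:ℝ) < n := by exact_mod_cast hn
  have hp0' : (p:ℝ) ≠ 0 := ne_of_gt hp0
  have hp1' : (p:ℝ) - 1 ≠ 0 := by linarith
  have hn' : (n:ℝ) ≠ 0 := ne_of_gt hn0
  constructor
  · rintro hx
    obtain ⟨y, hy, rfl⟩ := Set.mem_smul_set.mp hx
    set C : Set (Fin 2 → ℝ) :=
      {y | 0 ≤ y 1 ∧ (p:ℝ) * y 1 ≤ ((p:ℝ) - 1) * y 0 ∧ y 0 + (p:ℝ) * y 1 ≤ (p:ℝ)} with hC
    have hconv : Convex ℝ C := by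
      intro u hu v hv a b ha hb hab
      obtain ⟨u1, u2, u3⟩ := hu
      obtain ⟨v1, v2, v3⟩ := hv
      refine ⟨?_, ?_, ?_⟩ <;>
        simp only [Pi.add_apply, Pi.smul_apply, smul_eq_mul] <;> nlinarith
    have hsub : ({![0, 0], ![1, ((p : ℝ) - 1) / p], ![(p : ℝ), 0]} : Set (Fin 2 → ℝ)) ⊆ C := by
      rintro z (rfl | rfl | rfl)
      · refine ⟨?_, ?_, ?_⟩ <;>
          simp only [Matrix.cons_val_zero, Matrix.cons_val_one, Matrix.head_cons] <;> norm_num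
      · refine ⟨?_, ?_, ?_⟩ <;>
          simp only [Matrix.cons_val_zero, Matrix.cons_val_one, Matrix.head_cons]
        · apply div_nonneg <;> linarith
        · rw [mul_div_cancel₀ _ hp0']; nlinarith
        · rw [mul_div_cancel₀ _ hp0']; linarith
      · refine ⟨?_, ?_, ?_⟩ <;>
          simp only [Matrix.cons_val_zero, Matrix.cons_val_one, Matrix.head_cons] <;> nlinarith
    have hyC := convexHull_min hsub hconv hy
    obtain ⟨c1, c2, c3⟩ := hyC
    refine ⟨?_, ?_, ?_⟩ <;> simp only [Pi.smul_apply, smul_eq_mul] <;> nlinarith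
  · rintro ⟨h1, h2, h3⟩
    rw [Set.mem_smul_set]
    refine ⟨(n:ℝ)⁻¹ • x, ?_, by rw [smul_smul, mul_inv_cancel₀ hn', one_smul]⟩
    set D : ℝ := ((p:ℝ)-1) * n * p with hD
    have hD0 : 0 < D := by
      rw [hD]; exact mul_pos (mul_pos (by linarith) hn0) hp0
    set β : ℝ := ((p:ℝ) * x 1 * p) / D with hβ
    set γ : ℝ := (((p:ℝ)-1) * x 0 - (p:ℝ) * x 1) / D with hγ
    set α : ℝ := 1 - β - γ with hα
    have hβ0 : 0 ≤ β := by
      apply div_nonneg _ (le_of_lt hD0)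
      nlinarith [mul_nonneg (mul_nonneg (le_of_lt hp0) h1) (le_of_lt hp0)]
    have hγ0 : 0 ≤ γ := by
      apply div_nonneg _ (le_of_lt hD0)
      nlinarith
    have hsum : β + γ ≤ 1 := by
      rw [hβ, hγ, ← add_div, div_le_one hD0, hD]
      nlinarith
    have hα0 : 0 ≤ α := by rw [hα]; linarith
    have hmem : α • (![0, 0] : Fin 2 → ℝ) + β • ![1, ((p:ℝ)-1)/p] + γ • ![(p:ℝ), 0]
        ∈ convexHull ℝ ({![0, 0], ![1, ((p : ℝ) - 1) / p], ![(p : ℝ), 0]} : Set (Fin 2 → ℝ)) := by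
      apply combo_mem (convex_convexHull ℝ _)
        (subset_convexHull ℝ _ (by simp)) (subset_convexHull ℝ _ (by simp))
        (subset_convexHull ℝ _ (by simp)) hα0 hβ0 hγ0 (by rw [hα]; ring)
    convert hmem using 1
    funext j
    fin_cases j <;>
      simp only [Pi.add_apply, Pi.smul_apply, smul_eq_mul, Matrix.cons_val_zero,
        Matrix.cons_val_one, Matrix.head_cons, Fin.isValue, Fin.zero_eta, Fin.mk_one] <;>
      rw [hβ, hγ, hD] <;> field_simp <;> ring

/-- Period collapse: for the triangle `Δ = conv{(0,0), (1,(p-1)/p), (p,0)}` with integer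
`p ≥ 2` and any positive integer `n`, the number of lattice points in `nΔ` equals
`((p-1)/2)n² + ((p+1)/2)n + 1`; in particular the Ehrhart counting function is a
polynomial in `n`. -/
theorem stmt13 (p : ℕ) (hp : 2 ≤ p) (n : ℕ) (hn : 0 < n) :
    (({x : Fin 2 → ℝ |
        x ∈ (n : ℝ) • convexHull ℝ
          ({![0, 0], ![1, ((p : ℝ) - 1) / p], ![(p : ℝ), 0]} : Set (Fin 2 → ℝ)) ∧
        ∀ j, ∃ m : ℤ, (m : ℝ) = x j}).ncard : ℚ) =
      ((p : ℚ) - 1) / 2 * n ^ 2 + ((p : ℚ) + 1) / 2 * n + 1 := by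
  have hinj : Function.Injective (fun q : ℕ × ℕ => (![(q.1:ℝ), (q.2:ℝ)] : Fin 2 → ℝ)) := by
    intro q r h
    have h0 := congrFun h 0
    have h1 := congrFun h 1
    simp only [Matrix.cons_val_zero, Matrix.cons_val_one, Matrix.head_cons, Nat.cast_inj] at h0 h1
    exact Prod.ext h0 h1
  have hset : {x : Fin 2 → ℝ |
        x ∈ (n : ℝ) • convexHull ℝ
          ({![0, 0], ![1, ((p : ℝ) - 1) / p], ![(p : ℝ), 0]} : Set (Fin 2 → ℝ)) ∧
        ∀ j, ∃ m : ℤ, (m : ℝ) = x j}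
      = (fun q : ℕ × ℕ => (![(q.1:ℝ), (q.2:ℝ)] : Fin 2 → ℝ)) '' ↑(latF p n) := by
    ext x
    simp only [Set.mem_setOf_eq, Set.mem_image, Finset.mem_coe]
    constructor
    · rintro ⟨hconv, hint⟩
      rw [mem_dilate p n hp hn] at hconv
      obtain ⟨h1, h2, h3⟩ := hconv
      obtain ⟨m0, hm0⟩ := hint 0
      obtain ⟨m1, hm1⟩ := hint 1
      rw [← hm0] at h2 h3
      rw [← hm1] at h1 h2 h3
      have i1 : 0 ≤ m1 := by exact_mod_cast h1
      have i2 : (p:ℤ) * m1 ≤ ((p:ℤ) - 1) * m0 := by exact_mod_cast h2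
      have i3 : m0 + (p:ℤ) * m1 ≤ (n:ℤ) * p := by exact_mod_cast h3
      have hp1 : (1:ℤ) < p := by exact_mod_cast (by omega : 1 < p)
      have i0 : 0 ≤ m0 := by nlinarith
      refine ⟨(m0.toNat, m1.toNat), (mem_latF p n hp _).mpr ⟨?_, ?_, ?_⟩, ?_⟩
      · have : (m0:ℤ) ≤ (n:ℤ) * p := by nlinarith
        zify [Int.toNat_of_nonneg i0]
        exact_mod_cast this
      · zify [Int.toNat_of_nonneg i0, Int.toNat_of_nonneg i1, show 1 ≤ p from by omega]
        exact_mod_cast i2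
      · zify [Int.toNat_of_nonneg i0, Int.toNat_of_nonneg i1]
        exact_mod_cast i3
      · funext j
        fin_cases j <;>
          simp only [Matrix.cons_val_zero, Matrix.cons_val_one, Matrix.head_cons, Fin.isValue]
        · show ((m0.toNat : ℕ) : ℝ) = x 0
          rw [← hm0]; exact_mod_cast Int.toNat_of_nonneg i0
        · show ((m1.toNat : ℕ) : ℝ) = x 1
          rw [← hm1]; exact_mod_cast Int.toNat_of_nonneg i1
    · rintro ⟨⟨a, b⟩, hq, rfl⟩
      obtain ⟨h1, h2, h3⟩ := (mem_latF p n hp _).mp hq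
      constructor
      · rw [mem_dilate p n hp hn]
        simp only [Matrix.cons_val_zero, Matrix.cons_val_one, Matrix.head_cons]
        have c2 : ((p * b : ℕ) : ℝ) ≤ (((p-1) * a : ℕ) : ℝ) := Nat.cast_le.mpr h2
        have c3 : ((a + p * b : ℕ) : ℝ) ≤ ((n * p : ℕ) : ℝ) := Nat.cast_le.mpr h3
        push_cast [Nat.cast_sub (show 1 ≤ p from by omega)] at c2 c3
        exact ⟨by positivity, by linarith, by linarith⟩
      · intro j
        fin_cases j
        · exact ⟨(a : ℤ), by push_cast; simp⟩
        · exact ⟨(b : ℤ), by push_cast; simp⟩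
  rw [hset, Set.ncard_image_of_injective _ hinj, Set.ncard_coe_finset, card_latF]
  have hcount := count p n hp hn
  have hc : (2:ℚ) * ((∑ a ∈ Finset.range (n*p+1),
      (min ((p-1)*a/p) ((n*p-a)/p) + 1) : ℕ) : ℚ)
      = ((p:ℚ)-1)*(n:ℚ)^2 + ((p:ℚ)+1)*(n:ℚ) + 2 := by
    rw [show (2:ℚ) * ((∑ a ∈ Finset.range (n*p+1),
      (min ((p-1)*a/p) ((n*p-a)/p) + 1) : ℕ) : ℚ) = ((2 * ∑ a ∈ Finset.range (n*p+1),
      (min ((p-1)*a/p) ((n*p-a)/p) + 1) : ℕ) : ℚ) from by push_cast; ring, hcount]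
    push_cast [Nat.cast_sub (show 1 ≤ p from by omega)]
    ring
  linear_combination hc / 2
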